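/- Let (A,H,▶,ρ) be a linked pair of bialgebras where A and H are cosemisimple with normal integrals φ_A and φ_H. Then the bismash product A#H is cosemisimple, Φ(a#x) = φ_A(a)φ_H(x) is a normal integral on A#H, and φ_H: H → ℂ is a morphism of right A-comodules, i.e. ∑φ_H(x_H)x_A = φ_H(x)1_A for all x ∈ H. -/

import Mathlib

open scoped TensorProduct
open Coalgebra

noncomputable section

/-- A Sweedler representation of the comultiplication of `x`:
`Δ x = ∑ᵢ x1 i ⊗ x2 i`. -/
def Rep2 {H : Type} [AddCommGroup H] [Module ℂ H] [Coalgebra ℂ H]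
    {ι : Type} (x : H) (s : Finset ι) (x1 x2 : ι → H) : Prop :=
  Coalgebra.comul (R := ℂ) x = ∑ i ∈ s, x1 i ⊗ₜ[ℂ] x2 i

/-- A representation of an element of a tensor product as a finite sum of pure tensors. -/
def TRep {M N : Type} [AddCommGroup M] [Module ℂ M] [AddCommGroup N] [Module ℂ N]
    {ι : Type} (w : M ⊗[ℂ] N) (s : Finset ι) (p : ι → M) (q : ι → N) : Prop :=
  w = ∑ i ∈ s, p i ⊗ₜ[ℂ] q i

/-- The iterated comultiplication `x ↦ ∑ (x₁ ⊗ x₂) ⊗ x₃`. -/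
def comul3 (H : Type) [AddCommGroup H] [Module ℂ H] [Coalgebra ℂ H] :
    H →ₗ[ℂ] (H ⊗[ℂ] H) ⊗[ℂ] H :=
  (LinearMap.rTensor H (Coalgebra.comul (R := ℂ))) ∘ₗ Coalgebra.comul (R := ℂ)

/-- The iterated comultiplication with four output legs. -/
def comul4 (H : Type) [AddCommGroup H] [Module ℂ H] [Coalgebra ℂ H] :
    H →ₗ[ℂ] ((H ⊗[ℂ] H) ⊗[ℂ] H) ⊗[ℂ] H :=
  (LinearMap.rTensor H (comul3 H)) ∘ₗ Coalgebra.comul (R := ℂ)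

/-- The iterated comultiplication with five output legs. -/
def comul5 (H : Type) [AddCommGroup H] [Module ℂ H] [Coalgebra ℂ H] :
    H →ₗ[ℂ] (((H ⊗[ℂ] H) ⊗[ℂ] H) ⊗[ℂ] H) ⊗[ℂ] H :=
  (LinearMap.rTensor H (comul4 H)) ∘ₗ Coalgebra.comul (R := ℂ)

/-- The iterated comultiplication with six output legs. -/
def comul6 (H : Type) [AddCommGroup H] [Module ℂ H] [Coalgebra ℂ H] :
    H →ₗ[ℂ] ((((H ⊗[ℂ] H) ⊗[ℂ] H) ⊗[ℂ] H) ⊗[ℂ] H) ⊗[ℂ] H :=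
  (LinearMap.rTensor H (comul5 H)) ∘ₗ Coalgebra.comul (R := ℂ)

/-- A `*`-structure on a Hopf algebra over `ℂ`: a conjugate-linear involution which is
antimultiplicative and comultiplicative.  Together with the Hopf algebra this is the data of
a `*`-Hopf algebra. -/
structure StarHopf (H : Type) [Ring H] [HopfAlgebra ℂ H] : Type where
  st : H → H
  st_add : ∀ x y : H, st (x + y) = st x + st y
  st_smul : ∀ (c : ℂ) (x : H), st (c • x) = (starRingEnd ℂ) c • st x
  st_invol : ∀ x : H, st (st x) = x
  st_antimul : ∀ x y : H, st (x * y) = st y * st x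
  st_comul : ∀ (x : H) {ι : Type} (s : Finset ι) (x1 x2 : ι → H),
      Rep2 x s x1 x2 →
      Coalgebra.comul (R := ℂ) (st x) = ∑ i ∈ s, st (x1 i) ⊗ₜ[ℂ] st (x2 i)

/-- A right comodule over a Hopf algebra. -/
structure RightComodule (H : Type) [Ring H] [HopfAlgebra ℂ H]
    (V : Type) [AddCommGroup V] [Module ℂ V] : Type where
  ρ : V →ₗ[ℂ] V ⊗[ℂ] H
  counit_cond : ∀ v : V, (TensorProduct.rid ℂ V)
      ((LinearMap.lTensor V (Coalgebra.counit (R := ℂ))) (ρ v)) = v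
  coassoc_cond : ∀ v : V, (LinearMap.rTensor H ρ) (ρ v)
      = (TensorProduct.assoc ℂ V H H).symm
          ((LinearMap.lTensor V (Coalgebra.comul (R := ℂ))) (ρ v))

/-- An inner product: sesquilinear (linear in the first variable), conjugate-symmetric and
positive definite. -/
structure IsInner {V : Type} [AddCommGroup V] [Module ℂ V] (ip : V → V → ℂ) : Prop where
  add_left : ∀ u u' v : V, ip (u + u') v = ip u v + ip u' v
  smul_left : ∀ (c : ℂ) (u v : V), ip (c • u) v = c * ip u v
  conj_symm : ∀ u v : V, ip v u = (starRingEnd ℂ) (ip u v)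
  pos_def : ∀ v : V, v ≠ 0 → 0 < (ip v v).re

/-- The invariance condition `∑ ⟨u₀,v⟩ S(u₁) = ∑ ⟨u,v₀⟩ v₁*` for a sesquilinear form on a
right comodule. -/
def RInvariant {H : Type} [Ring H] [HopfAlgebra ℂ H] (σ : StarHopf H)
    {V : Type} [AddCommGroup V] [Module ℂ V] (c : RightComodule H V)
    (ip : V → V → ℂ) : Prop :=
  ∀ (u v : V) {ι κ : Type} (s : Finset ι) (t : Finset κ)
    (u0 : ι → V) (u1 : ι → H) (v0 : κ → V) (v1 : κ → H),
    TRep (c.ρ u) s u0 u1 → TRep (c.ρ v) t v0 v1 →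
    ∑ i ∈ s, ip (u0 i) v • (HopfAlgebra.antipode (R := ℂ) (u1 i))
      = ∑ j ∈ t, ip u (v0 j) • σ.st (v1 j)

/-- A compact quantum group: a `*`-Hopf algebra such that every right comodule admits an
invariant inner product. -/
def IsCQG (H : Type) [Ring H] [HopfAlgebra ℂ H] (σ : StarHopf H) : Prop :=
  ∀ (V : Type) [AddCommGroup V] [Module ℂ V] (c : RightComodule H V),
    ∃ ip : V → V → ℂ, IsInner ip ∧ RInvariant σ c ip

/-- `φ` is a normal integral on the Hopf algebra `H` (a two-sided integral with `φ(1) = 1`);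
a Hopf algebra is cosemisimple iff it admits a normal integral. -/
def IsNormalIntegral (H : Type) [Ring H] [HopfAlgebra ℂ H] (φ : H →ₗ[ℂ] ℂ) : Prop :=
  φ 1 = 1 ∧
  (∀ (x : H) {ι : Type} (s : Finset ι) (x1 x2 : ι → H), Rep2 x s x1 x2 →
      ∑ i ∈ s, φ (x1 i) • x2 i = φ x • (1 : H)) ∧
  (∀ (x : H) {ι : Type} (s : Finset ι) (x1 x2 : ι → H), Rep2 x s x1 x2 →
      ∑ i ∈ s, φ (x2 i) • x1 i = φ x • (1 : H))

section LinkedPair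

variable (A H : Type) [Ring A] [HopfAlgebra ℂ A] [Ring H] [HopfAlgebra ℂ H]

/-- A linked pair of bialgebras `(A, H, ▶, ρ)` (a cocycle linked pair with trivial cocycle
and cococycle): `A` is a left `H`-module algebra via `tri x a = x ▶ a`, `H` is a right
`A`-comodule coalgebra via `rho = ρ : H → H ⊗ A`, and the compatibility relations hold. -/
structure IsLinkedPair
    (tri : H →ₗ[ℂ] A →ₗ[ℂ] A) (rho : H →ₗ[ℂ] H ⊗[ℂ] A) : Prop where
  -- `A` is a left `H`-module algebra
  tri_one_act : ∀ a : A, tri 1 a = a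
  tri_mul_act : ∀ (x y : H) (a : A), tri (x * y) a = tri x (tri y a)
  tri_one : ∀ x : H, tri x 1 = Coalgebra.counit (R := ℂ) x • (1 : A)
  tri_mul : ∀ (x : H) (a b : A) {ι : Type} (s : Finset ι) (x1 x2 : ι → H),
      Rep2 x s x1 x2 → tri x (a * b) = ∑ i ∈ s, tri (x1 i) a * tri (x2 i) b
  -- `H` is a right `A`-comodule coalgebra
  rho_counit : ∀ (x : H) {ι : Type} (s : Finset ι) (h : ι → H) (c : ι → A),
      TRep (rho x) s h c →
      ∑ i ∈ s, Coalgebra.counit (R := ℂ) (h i) • c i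
        = Coalgebra.counit (R := ℂ) x • (1 : A)
  rho_comul : ∀ (x : H) {ι : Type} (s : Finset ι) (g k : ι → H) (c d : ι → A),
      (TensorProduct.map rho rho) (Coalgebra.comul (R := ℂ) x)
        = ∑ i ∈ s, (g i ⊗ₜ[ℂ] c i) ⊗ₜ[ℂ] (k i ⊗ₜ[ℂ] d i) →
      (LinearMap.rTensor A (Coalgebra.comul (R := ℂ))) (rho x)
        = ∑ i ∈ s, (g i ⊗ₜ[ℂ] k i) ⊗ₜ[ℂ] (c i * d i)
  rho_id : ∀ (x : H) {ι : Type} (s : Finset ι) (h : ι → H) (c : ι → A),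
      TRep (rho x) s h c → ∑ i ∈ s, Coalgebra.counit (R := ℂ) (c i) • h i = x
  rho_coassoc : ∀ x : H,
      (TensorProduct.assoc ℂ H A A) ((LinearMap.rTensor A rho) (rho x))
        = (LinearMap.lTensor H (Coalgebra.comul (R := ℂ) : A →ₗ[ℂ] A ⊗[ℂ] A)) (rho x)
  -- the compatibility relations
  compat_counit : ∀ (x : H) (a : A), Coalgebra.counit (R := ℂ) (tri x a)
      = Coalgebra.counit (R := ℂ) x * Coalgebra.counit (R := ℂ) a
  compat_one : rho 1 = (1 : H) ⊗ₜ[ℂ] (1 : A)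
  compat_comul : ∀ (x : H) (a : A) {ι κ : Type} (s : Finset ι) (t : Finset κ)
      (a1 a2 : ι → A) (g : κ → H) (c : κ → A) (u : κ → H),
      Rep2 a s a1 a2 →
      (TensorProduct.map rho (LinearMap.id : H →ₗ[ℂ] H)) (Coalgebra.comul (R := ℂ) x)
        = ∑ j ∈ t, (g j ⊗ₜ[ℂ] c j) ⊗ₜ[ℂ] u j →
      Coalgebra.comul (R := ℂ) (tri x a)
        = ∑ j ∈ t, ∑ i ∈ s, tri (g j) (a1 i) ⊗ₜ[ℂ] (c j * tri (u j) (a2 i))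
  compat_rho_mul : ∀ (x y : H) {ι κ : Type} (s : Finset ι) (t : Finset κ)
      (g : ι → H) (c : ι → A) (u : ι → H) (k : κ → H) (d : κ → A),
      (TensorProduct.map rho (LinearMap.id : H →ₗ[ℂ] H)) (Coalgebra.comul (R := ℂ) x)
        = ∑ i ∈ s, (g i ⊗ₜ[ℂ] c i) ⊗ₜ[ℂ] u i →
      TRep (rho y) t k d →
      rho (x * y) = ∑ i ∈ s, ∑ j ∈ t, (g i * k j) ⊗ₜ[ℂ] (c i * tri (u i) (d j))
  compat_sym : ∀ (x : H) (a : A) {ι κ : Type} (s : Finset ι) (t : Finset κ)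
      (x1 : ι → H) (h : ι → H) (b : ι → A)
      (g : κ → H) (c : κ → A) (x2 : κ → H),
      (LinearMap.lTensor H rho) (Coalgebra.comul (R := ℂ) x)
        = ∑ i ∈ s, x1 i ⊗ₜ[ℂ] (h i ⊗ₜ[ℂ] b i) →
      (LinearMap.rTensor H rho) (Coalgebra.comul (R := ℂ) x)
        = ∑ j ∈ t, (g j ⊗ₜ[ℂ] c j) ⊗ₜ[ℂ] x2 j →
      ∑ i ∈ s, h i ⊗ₜ[ℂ] (tri (x1 i) a * b i)
        = ∑ j ∈ t, g j ⊗ₜ[ℂ] (c j * tri (x2 j) a)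

/-- `M`, identified with `A ⊗ H` via `e`, carries the Hopf algebra structure of the bismash
product `A # H` of the linked pair `(A, H, ▶, ρ)`. -/
structure IsBismash
    (tri : H →ₗ[ℂ] A →ₗ[ℂ] A) (rho : H →ₗ[ℂ] H ⊗[ℂ] A)
    (M : Type) [Ring M] [HopfAlgebra ℂ M] (e : A ⊗[ℂ] H ≃ₗ[ℂ] M) : Prop where
  mul_def : ∀ (a b : A) (x y : H) {ι : Type} (s : Finset ι) (x1 x2 : ι → H),
      Rep2 x s x1 x2 →
      e (a ⊗ₜ[ℂ] x) * e (b ⊗ₜ[ℂ] y)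
        = ∑ i ∈ s, e ((a * tri (x1 i) b) ⊗ₜ[ℂ] (x2 i * y))
  one_def : (1 : M) = e ((1 : A) ⊗ₜ[ℂ] (1 : H))
  comul_def : ∀ (a : A) (x : H) {ι κ : Type} (s : Finset ι) (t : Finset κ)
      (a1 a2 : ι → A) (g : κ → H) (c : κ → A) (u : κ → H),
      Rep2 a s a1 a2 →
      (TensorProduct.map rho (LinearMap.id : H →ₗ[ℂ] H)) (Coalgebra.comul (R := ℂ) x)
        = ∑ j ∈ t, (g j ⊗ₜ[ℂ] c j) ⊗ₜ[ℂ] u j →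
      Coalgebra.comul (R := ℂ) (e (a ⊗ₜ[ℂ] x))
        = ∑ i ∈ s, ∑ j ∈ t, e (a1 i ⊗ₜ[ℂ] g j) ⊗ₜ[ℂ] e ((a2 i * c j) ⊗ₜ[ℂ] u j)
  counit_def : ∀ (a : A) (x : H),
      Coalgebra.counit (R := ℂ) (e (a ⊗ₜ[ℂ] x))
        = Coalgebra.counit (R := ℂ) a * Coalgebra.counit (R := ℂ) x

end LinkedPair

namespace BismashAux

variable {V W : Type} [AddCommGroup V] [Module ℂ V] [AddCommGroup W] [Module ℂ W]

/-- `v ⊗ w ↦ f v • w`. -/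
def lap (f : V →ₗ[ℂ] ℂ) : V ⊗[ℂ] W →ₗ[ℂ] W :=
  (TensorProduct.lid ℂ W).toLinearMap ∘ₗ f.rTensor W

/-- `w ⊗ v ↦ f v • w`. -/
def rap (f : V →ₗ[ℂ] ℂ) : W ⊗[ℂ] V →ₗ[ℂ] W :=
  (TensorProduct.rid ℂ W).toLinearMap ∘ₗ f.lTensor W

@[simp] lemma lap_tmul (f : V →ₗ[ℂ] ℂ) (v : V) (w : W) : lap f (v ⊗ₜ[ℂ] w) = f v • w := by
  simp [lap]

@[simp] lemma rap_tmul (f : V →ₗ[ℂ] ℂ) (v : V) (w : W) : rap f (w ⊗ₜ[ℂ] v) = f v • w := by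
  simp [rap]

variable {C : Type} [AddCommGroup C] [Module ℂ C] [Coalgebra ℂ C]

lemma lap_counit_comul (x : C) : lap (Coalgebra.counit (R := ℂ)) (Coalgebra.comul x) = x := by
  simp [lap, Coalgebra.rTensor_counit_comul]

lemma rap_counit_comul (x : C) : rap (Coalgebra.counit (R := ℂ)) (Coalgebra.comul x) = x := by
  simp [rap, Coalgebra.lTensor_counit_comul]

/-- A fixed chosen representation of the comultiplication. -/
def crep (x : C) : Finset (C × C) :=
  (TensorProduct.exists_finset (R := ℂ) (Coalgebra.comul x)).choose

lemma crep_spec (x : C) :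
    Coalgebra.comul (R := ℂ) x = ∑ p ∈ crep x, p.1 ⊗ₜ[ℂ] p.2 :=
  (TensorProduct.exists_finset (R := ℂ) (Coalgebra.comul x)).choose_spec

lemma crep_counit_left (x : C) :
    ∑ p ∈ crep x, Coalgebra.counit (R := ℂ) p.1 • p.2 = x := by
  have h := lap_counit_comul x
  rw [crep_spec x] at h
  simpa [map_sum] using h

lemma crep_counit_right (x : C) :
    ∑ p ∈ crep x, Coalgebra.counit (R := ℂ) p.2 • p.1 = x := by
  have h := rap_counit_comul x
  rw [crep_spec x] at h
  simpa [map_sum] using h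

lemma coassoc_rep (x : C) :
    ∑ p ∈ crep x, ∑ q ∈ crep p.1, (q.1 ⊗ₜ[ℂ] q.2) ⊗ₜ[ℂ] p.2
      = ∑ p ∈ crep x, ∑ q ∈ crep p.2, (p.1 ⊗ₜ[ℂ] q.1) ⊗ₜ[ℂ] q.2 := by
  have h1 : (Coalgebra.comul (R := ℂ)).rTensor C (Coalgebra.comul x)
      = ∑ p ∈ crep x, ∑ q ∈ crep p.1, (q.1 ⊗ₜ[ℂ] q.2) ⊗ₜ[ℂ] p.2 := by
    rw [crep_spec x, map_sum]
    refine Finset.sum_congr rfl fun p _ => ?_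
    rw [LinearMap.rTensor_tmul, crep_spec p.1, TensorProduct.sum_tmul]
  have h2 : (Coalgebra.comul (R := ℂ)).lTensor C (Coalgebra.comul x)
      = ∑ p ∈ crep x, ∑ q ∈ crep p.2, p.1 ⊗ₜ[ℂ] (q.1 ⊗ₜ[ℂ] q.2) := by
    rw [crep_spec x, map_sum]
    refine Finset.sum_congr rfl fun p _ => ?_
    rw [LinearMap.lTensor_tmul, crep_spec p.2, TensorProduct.tmul_sum]
  have h3 := Coalgebra.coassoc_symm_apply (R := ℂ) x
  rw [h1] at h3
  rw [← h3, h2, map_sum]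
  refine Finset.sum_congr rfl fun p _ => ?_
  rw [map_sum]
  exact Finset.sum_congr rfl fun q _ => by simp [TensorProduct.assoc_symm_tmul]

lemma coassoc_rep' (x : C) :
    ∑ p ∈ crep x, ∑ q ∈ crep p.1, q.1 ⊗ₜ[ℂ] (q.2 ⊗ₜ[ℂ] p.2)
      = ∑ p ∈ crep x, ∑ q ∈ crep p.2, p.1 ⊗ₜ[ℂ] (q.1 ⊗ₜ[ℂ] q.2) := by
  have h := congrArg (TensorProduct.assoc ℂ C C C) (coassoc_rep x)
  simpa [map_sum, TensorProduct.assoc_tmul] using h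

/-- Every element of `(M₁ ⊗ M₂) ⊗ M₃` is a finite sum of pure triple tensors. -/
lemma exists_trep {M₁ M₂ M₃ : Type} [AddCommGroup M₁] [Module ℂ M₁]
    [AddCommGroup M₂] [Module ℂ M₂] [AddCommGroup M₃] [Module ℂ M₃]
    (w : (M₁ ⊗[ℂ] M₂) ⊗[ℂ] M₃) :
    ∃ (ι : Type) (t : Finset ι) (g : ι → M₁) (c : ι → M₂) (u : ι → M₃),
      w = ∑ j ∈ t, (g j ⊗ₜ[ℂ] c j) ⊗ₜ[ℂ] u j := by
  induction w using TensorProduct.induction_on with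
  | zero => exact ⟨ℕ, ∅, 0, 0, 0, by simp⟩
  | tmul p u =>
    obtain ⟨S, hS⟩ := TensorProduct.exists_finset (R := ℂ) p
    exact ⟨M₁ × M₂, S, Prod.fst, Prod.snd, fun _ => u,
      by rw [hS, TensorProduct.sum_tmul]⟩
  | add w₁ w₂ ih₁ ih₂ =>
    obtain ⟨ι₁, t₁, g₁, c₁, u₁, h₁⟩ := ih₁
    obtain ⟨ι₂, t₂, g₂, c₂, u₂, h₂⟩ := ih₂
    refine ⟨ι₁ ⊕ ι₂, t₁.disjSum t₂, Sum.elim g₁ g₂, Sum.elim c₁ c₂, Sum.elim u₁ u₂, ?_⟩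
    rw [h₁, h₂, Finset.sum_disjSum]
    simp

section Hopf

variable {N : Type} [Ring N] [HopfAlgebra ℂ N]

lemma antipode_one' : (HopfAlgebra.antipode (R := ℂ)) (1 : N) = 1 := by
  have h := HopfAlgebra.mul_antipode_rTensor_comul_apply (R := ℂ) (1 : N)
  simpa [Algebra.TensorProduct.one_def] using h

lemma crep_antipode_left (x : N) :
    ∑ p ∈ crep x, (HopfAlgebra.antipode (R := ℂ)) p.1 * p.2
      = Coalgebra.counit (R := ℂ) x • 1 :=
  HopfAlgebra.sum_antipode_mul_eq_smul
    { index := crep x, left := Prod.fst, right := Prod.snd, eq := (crep_spec x).symm }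

lemma crep_antipode_right (x : N) :
    ∑ p ∈ crep x, p.1 * (HopfAlgebra.antipode (R := ℂ)) p.2
      = Coalgebra.counit (R := ℂ) x • 1 :=
  HopfAlgebra.sum_mul_antipode_eq_smul
    { index := crep x, left := Prod.fst, right := Prod.snd, eq := (crep_spec x).symm }

/-- Convolution product on linear maps `N →ₗ N ⊗ N`. -/
def conv (f g : N →ₗ[ℂ] N ⊗[ℂ] N) : N →ₗ[ℂ] N ⊗[ℂ] N :=
  LinearMap.mul' ℂ (N ⊗[ℂ] N) ∘ₗ TensorProduct.map f g ∘ₗ Coalgebra.comul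

lemma conv_apply (f g : N →ₗ[ℂ] N ⊗[ℂ] N) (x : N) :
    conv f g x = ∑ p ∈ crep x, f p.1 * g p.2 := by
  simp only [conv, LinearMap.comp_apply]
  rw [crep_spec x, map_sum, map_sum]
  exact Finset.sum_congr rfl fun p _ => by simp [LinearMap.mul'_apply]

/-- The convolution unit. -/
def cu : N →ₗ[ℂ] N ⊗[ℂ] N :=
  Algebra.linearMap ℂ (N ⊗[ℂ] N) ∘ₗ Coalgebra.counit

lemma cu_apply (x : N) : (cu x : N ⊗[ℂ] N) = Coalgebra.counit (R := ℂ) x • 1 := by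
  simp [cu, Algebra.algebraMap_eq_smul_one]

lemma conv_cu_right (f : N →ₗ[ℂ] N ⊗[ℂ] N) : conv f cu = f := by
  ext x
  rw [conv_apply]
  calc ∑ p ∈ crep x, f p.1 * cu p.2
      = ∑ p ∈ crep x, Coalgebra.counit (R := ℂ) p.2 • f p.1 := by
        refine Finset.sum_congr rfl fun p _ => ?_
        rw [cu_apply, mul_smul_comm, mul_one]
    _ = f (∑ p ∈ crep x, Coalgebra.counit (R := ℂ) p.2 • p.1) := by
        rw [map_sum]; simp
    _ = f x := by rw [crep_counit_right]

lemma conv_cu_left (f : N →ₗ[ℂ] N ⊗[ℂ] N) : conv cu f = f := by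
  ext x
  rw [conv_apply]
  calc ∑ p ∈ crep x, cu p.1 * f p.2
      = ∑ p ∈ crep x, Coalgebra.counit (R := ℂ) p.1 • f p.2 := by
        refine Finset.sum_congr rfl fun p _ => ?_
        rw [cu_apply, smul_mul_assoc, one_mul]
    _ = f (∑ p ∈ crep x, Coalgebra.counit (R := ℂ) p.1 • p.2) := by
        rw [map_sum]; simp
    _ = f x := by rw [crep_counit_left]

lemma conv_assoc (f g h : N →ₗ[ℂ] N ⊗[ℂ] N) :
    conv (conv f g) h = conv f (conv g h) := by
  ext x
  set W : (N ⊗[ℂ] N) ⊗[ℂ] N →ₗ[ℂ] N ⊗[ℂ] N :=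
    LinearMap.mul' ℂ (N ⊗[ℂ] N) ∘ₗ
      TensorProduct.map (LinearMap.mul' ℂ (N ⊗[ℂ] N) ∘ₗ TensorProduct.map f g) h with hW
  have hWt : ∀ (y z w : N), W ((y ⊗ₜ[ℂ] z) ⊗ₜ[ℂ] w) = (f y * g z) * h w := by
    intro y z w; simp [hW, LinearMap.mul'_apply]
  have key := congrArg (⇑W) (coassoc_rep x)
  simp only [map_sum, hWt] at key
  calc conv (conv f g) h x
      = ∑ p ∈ crep x, ∑ q ∈ crep p.1, (f q.1 * g q.2) * h p.2 := by
        rw [conv_apply]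
        refine Finset.sum_congr rfl fun p _ => ?_
        rw [conv_apply, Finset.sum_mul]
    _ = ∑ p ∈ crep x, ∑ q ∈ crep p.2, (f p.1 * g q.1) * h q.2 := key
    _ = conv f (conv g h) x := by
        rw [conv_apply]
        refine Finset.sum_congr rfl fun p _ => ?_
        rw [conv_apply, Finset.mul_sum]
        exact Finset.sum_congr rfl fun q _ => (mul_assoc _ _ _)

/-- The map `x ↦ ∑ S x₂ ⊗ S x₁`. -/
def RR : N →ₗ[ℂ] N ⊗[ℂ] N :=
  (TensorProduct.comm ℂ N N).toLinearMap ∘ₗ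
    TensorProduct.map (HopfAlgebra.antipode (R := ℂ)) (HopfAlgebra.antipode (R := ℂ)) ∘ₗ
      Coalgebra.comul

lemma RR_apply (x : N) :
    RR x = ∑ p ∈ crep x,
      (HopfAlgebra.antipode (R := ℂ)) p.2 ⊗ₜ[ℂ] (HopfAlgebra.antipode (R := ℂ)) p.1 := by
  simp only [RR, LinearMap.comp_apply]
  rw [crep_spec x, map_sum, map_sum]
  simp

lemma conv_comul_SL :
    conv (Coalgebra.comul (R := ℂ) (A := N))
      (Coalgebra.comul (R := ℂ) ∘ₗ HopfAlgebra.antipode (R := ℂ)) = cu := by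
  ext x
  rw [conv_apply, cu_apply]
  calc ∑ p ∈ crep x, Coalgebra.comul (R := ℂ) p.1 *
        (Coalgebra.comul (R := ℂ) ∘ₗ HopfAlgebra.antipode (R := ℂ)) p.2
      = ∑ p ∈ crep x,
          Coalgebra.comul (R := ℂ) (p.1 * (HopfAlgebra.antipode (R := ℂ)) p.2) :=
        Finset.sum_congr rfl fun p _ => by rw [LinearMap.comp_apply, Bialgebra.comul_mul]
    _ = Coalgebra.comul (R := ℂ)
          (∑ p ∈ crep x, p.1 * (HopfAlgebra.antipode (R := ℂ)) p.2) := (map_sum _ _ _).symm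
    _ = Coalgebra.counit (R := ℂ) x • 1 := by
        rw [crep_antipode_right, map_smul, Bialgebra.comul_one]

lemma inner2 (n m : N) :
    ∑ q ∈ crep m,
        ((HopfAlgebra.antipode (R := ℂ)) q.1 ⊗ₜ[ℂ] (HopfAlgebra.antipode (R := ℂ)) n) *
          Coalgebra.comul (R := ℂ) q.2
      = (1 : N) ⊗ₜ[ℂ] ((HopfAlgebra.antipode (R := ℂ)) n * m) := by
  set S := (HopfAlgebra.antipode (R := ℂ) (A := N)) with hS
  set V : N ⊗[ℂ] (N ⊗[ℂ] N) →ₗ[ℂ] N ⊗[ℂ] N :=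
    TensorProduct.map (LinearMap.mul' ℂ N ∘ₗ S.rTensor N) (LinearMap.mulLeft ℂ (S n)) ∘ₗ
      (TensorProduct.assoc ℂ N N N).symm.toLinearMap with hV
  have hVt : ∀ (y z w : N), V (y ⊗ₜ[ℂ] (z ⊗ₜ[ℂ] w)) = (S y * z) ⊗ₜ[ℂ] (S n * w) := by
    intro y z w
    simp [hV, TensorProduct.assoc_symm_tmul, LinearMap.mul'_apply]
  have key := congrArg (⇑V) (coassoc_rep' m)
  simp only [map_sum, hVt] at key
  have e1 : ∀ q : N × N,
      (S q.1 ⊗ₜ[ℂ] S n) * Coalgebra.comul (R := ℂ) q.2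
        = ∑ q' ∈ crep q.2, (S q.1 * q'.1) ⊗ₜ[ℂ] (S n * q'.2) := by
    intro q
    rw [crep_spec q.2, Finset.mul_sum]
    exact Finset.sum_congr rfl fun q' _ => by rw [Algebra.TensorProduct.tmul_mul_tmul]
  calc ∑ q ∈ crep m, (S q.1 ⊗ₜ[ℂ] S n) * Coalgebra.comul (R := ℂ) q.2
      = ∑ q ∈ crep m, ∑ q' ∈ crep q.2, (S q.1 * q'.1) ⊗ₜ[ℂ] (S n * q'.2) :=
        Finset.sum_congr rfl fun q _ => e1 q
    _ = ∑ q ∈ crep m, ∑ q' ∈ crep q.1, (S q'.1 * q'.2) ⊗ₜ[ℂ] (S n * q.2) := key.symm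
    _ = ∑ q ∈ crep m, Coalgebra.counit (R := ℂ) q.1 • ((1 : N) ⊗ₜ[ℂ] (S n * q.2)) := by
        refine Finset.sum_congr rfl fun q _ => ?_
        rw [← TensorProduct.sum_tmul, crep_antipode_left q.1, TensorProduct.smul_tmul']
    _ = (1 : N) ⊗ₜ[ℂ] (S n * m) := by
        have : ∀ q : N × N, Coalgebra.counit (R := ℂ) q.1 • ((1 : N) ⊗ₜ[ℂ] (S n * q.2))
            = (1 : N) ⊗ₜ[ℂ] (S n * (Coalgebra.counit (R := ℂ) q.1 • q.2)) := by
          intro q; rw [mul_smul_comm, TensorProduct.tmul_smul]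
        rw [Finset.sum_congr rfl fun q _ => this q, ← TensorProduct.tmul_sum,
          ← Finset.mul_sum, crep_counit_left]

lemma conv_RR_comul : conv RR (Coalgebra.comul (R := ℂ) (A := N)) = cu := by
  ext x
  rw [conv_apply, cu_apply]
  set S := (HopfAlgebra.antipode (R := ℂ) (A := N)) with hS
  set W : (N ⊗[ℂ] N) ⊗[ℂ] N →ₗ[ℂ] N ⊗[ℂ] N :=
    LinearMap.mul' ℂ (N ⊗[ℂ] N) ∘ₗ
      TensorProduct.map
        ((TensorProduct.comm ℂ N N).toLinearMap ∘ₗ TensorProduct.map S S)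
        (Coalgebra.comul (R := ℂ)) with hW
  have hWt : ∀ (y z w : N),
      W ((y ⊗ₜ[ℂ] z) ⊗ₜ[ℂ] w) = (S z ⊗ₜ[ℂ] S y) * Coalgebra.comul (R := ℂ) w := by
    intro y z w; simp [hW, LinearMap.mul'_apply]
  have key := congrArg (⇑W) (coassoc_rep x)
  simp only [map_sum, hWt] at key
  calc ∑ p ∈ crep x, RR p.1 * Coalgebra.comul (R := ℂ) p.2
      = ∑ p ∈ crep x, ∑ q ∈ crep p.1, (S q.2 ⊗ₜ[ℂ] S q.1) * Coalgebra.comul (R := ℂ) p.2 := by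
        refine Finset.sum_congr rfl fun p _ => ?_
        rw [RR_apply, Finset.sum_mul]
    _ = ∑ p ∈ crep x, ∑ q ∈ crep p.2, (S q.1 ⊗ₜ[ℂ] S p.1) * Coalgebra.comul (R := ℂ) q.2 := key
    _ = ∑ p ∈ crep x, (1 : N) ⊗ₜ[ℂ] (S p.1 * p.2) :=
        Finset.sum_congr rfl fun p _ => inner2 p.1 p.2
    _ = (1 : N) ⊗ₜ[ℂ] (∑ p ∈ crep x, S p.1 * p.2) := by rw [TensorProduct.tmul_sum]
    _ = Coalgebra.counit (R := ℂ) x • 1 := by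
        rw [crep_antipode_left, TensorProduct.tmul_smul, Algebra.TensorProduct.one_def]

lemma comul_antipode_eq_RR :
    (Coalgebra.comul (R := ℂ)) ∘ₗ (HopfAlgebra.antipode (R := ℂ) (A := N)) = RR := by
  calc Coalgebra.comul (R := ℂ) ∘ₗ (HopfAlgebra.antipode (R := ℂ) (A := N))
      = conv cu (Coalgebra.comul (R := ℂ) ∘ₗ HopfAlgebra.antipode (R := ℂ)) :=
        (conv_cu_left _).symm
    _ = conv (conv RR (Coalgebra.comul (R := ℂ)))
          (Coalgebra.comul (R := ℂ) ∘ₗ HopfAlgebra.antipode (R := ℂ)) := by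
        rw [conv_RR_comul]
    _ = conv RR (conv (Coalgebra.comul (R := ℂ))
          (Coalgebra.comul (R := ℂ) ∘ₗ HopfAlgebra.antipode (R := ℂ))) := conv_assoc _ _ _
    _ = conv RR cu := by rw [conv_comul_SL]
    _ = RR := conv_cu_right _

lemma anticomul (x : N) :
    Coalgebra.comul (R := ℂ) ((HopfAlgebra.antipode (R := ℂ)) x)
      = ∑ p ∈ crep x,
          (HopfAlgebra.antipode (R := ℂ)) p.2 ⊗ₜ[ℂ] (HopfAlgebra.antipode (R := ℂ)) p.1 := by
  rw [← RR_apply]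
  exact LinearMap.congr_fun comul_antipode_eq_RR x

lemma right_to_left (φ : N →ₗ[ℂ] ℂ) (h1 : φ 1 = 1)
    (hr : ∀ x : N, rap φ (Coalgebra.comul x) = φ x • 1) (x : N) :
    lap φ (Coalgebra.comul x) = φ x • 1 := by
  set S := (HopfAlgebra.antipode (R := ℂ) (A := N)) with hS
  set ψ : N →ₗ[ℂ] ℂ := φ ∘ₗ S with hψ
  -- step c1 : ∑ φ(S y₁) • S y₂ = φ (S y) • 1
  have c1 : ∀ y : N, ∑ q ∈ crep y, φ (S q.1) • S q.2 = φ (S y) • 1 := by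
    intro y
    have h := hr (S y)
    rw [anticomul y, map_sum] at h
    simpa using h
  -- step c2 : ∑ ψ(x₁) • x₂ = ψ x • 1
  have c2 : ∀ y : N, ∑ p ∈ crep y, ψ p.1 • p.2 = ψ y • 1 := by
    intro y
    set Θ : N ⊗[ℂ] (N ⊗[ℂ] N) →ₗ[ℂ] N :=
      lap ψ ∘ₗ (LinearMap.mul' ℂ N ∘ₗ S.rTensor N).lTensor N with hΘ
    have hΘt : ∀ (a b c : N), Θ (a ⊗ₜ[ℂ] (b ⊗ₜ[ℂ] c)) = ψ a • (S b * c) := by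
      intro a b c; simp [hΘ, LinearMap.mul'_apply]
    have key := congrArg (⇑Θ) (coassoc_rep' y)
    simp only [map_sum, hΘt] at key
    have lhs : ∑ p ∈ crep y, ∑ q ∈ crep p.1, ψ q.1 • (S q.2 * p.2)
        = ∑ p ∈ crep y, ψ p.1 • p.2 := by
      refine Finset.sum_congr rfl fun p _ => ?_
      have : ∑ q ∈ crep p.1, ψ q.1 • (S q.2 * p.2)
          = (∑ q ∈ crep p.1, φ (S q.1) • S q.2) * p.2 := by
        rw [Finset.sum_mul]
        exact Finset.sum_congr rfl fun q _ => by rw [smul_mul_assoc]; rfl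
      rw [this, c1 p.1, smul_mul_assoc, one_mul]; rfl
    have rhs : ∑ p ∈ crep y, ∑ q ∈ crep p.2, ψ p.1 • (S q.1 * q.2)
        = ψ y • 1 := by
      have : ∀ p ∈ crep y, ∑ q ∈ crep p.2, ψ p.1 • (S q.1 * q.2)
          = (Coalgebra.counit (R := ℂ) p.2 * ψ p.1) • (1 : N) := by
        intro p _
        rw [← Finset.smul_sum, crep_antipode_left p.2, smul_smul, mul_comm]
      rw [Finset.sum_congr rfl this]
      have : ∑ p ∈ crep y, (Coalgebra.counit (R := ℂ) p.2 * ψ p.1) • (1 : N)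
          = (∑ p ∈ crep y, Coalgebra.counit (R := ℂ) p.2 * ψ p.1) • (1 : N) := by
        rw [Finset.sum_smul]
      rw [this]
      congr 1
      have := congrArg (⇑ψ) (crep_counit_right y)
      rw [map_sum] at this
      simpa [mul_comm] using this
    rw [lhs] at key
    rw [key, rhs]
  -- step c3 : ψ = φ
  have c3 : ∀ y : N, ψ y = φ y := by
    intro y
    have e1 : φ (∑ p ∈ crep y, ψ p.1 • p.2) = ψ y := by
      rw [c2 y, map_smul, h1, smul_eq_mul, mul_one]
    have e2 : ψ (∑ p ∈ crep y, φ p.2 • p.1) = φ y := by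
      have hψ1 : ψ 1 = 1 := by
        simp only [hψ, LinearMap.comp_apply]
        rw [show S (1 : N) = 1 from antipode_one', h1]
      have h := hr y
      rw [crep_spec y, map_sum] at h
      simp only [rap_tmul] at h
      rw [h, map_smul, hψ1, smul_eq_mul, mul_one]
    rw [map_sum] at e1 e2
    simp only [map_smul, smul_eq_mul] at e1 e2
    rw [← e1, ← e2]
    exact Finset.sum_congr rfl fun p _ => mul_comm _ _
  rw [crep_spec x, map_sum]
  simp only [lap_tmul]
  calc ∑ p ∈ crep x, φ p.1 • p.2 = ∑ p ∈ crep x, ψ p.1 • p.2 :=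
        Finset.sum_congr rfl fun p _ => by rw [c3 p.1]
    _ = ψ x • 1 := c2 x
    _ = φ x • 1 := by rw [c3 x]

lemma int_left {φ : N →ₗ[ℂ] ℂ} (h : IsNormalIntegral N φ) (x : N) :
    lap φ (Coalgebra.comul x) = φ x • 1 := by
  have h2 := h.2.1 x (crep x) Prod.fst Prod.snd (crep_spec x)
  rw [crep_spec x, map_sum]
  simpa using h2

lemma int_right {φ : N →ₗ[ℂ] ℂ} (h : IsNormalIntegral N φ) (x : N) :
    rap φ (Coalgebra.comul x) = φ x • 1 := by
  have h2 := h.2.2 x (crep x) Prod.fst Prod.snd (crep_spec x)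
  rw [crep_spec x, map_sum]
  simpa using h2

end Hopf

end BismashAux

open BismashAux

/-- Let `(A, H, ▶, ρ)` be a linked pair of bialgebras where `A` and `H` are
cosemisimple with normal integrals `φ_A` and `φ_H`.  Then the bismash product `A # H` is
cosemisimple, `Φ(a # x) = φ_A(a) φ_H(x)` is a normal integral on `A # H`, and
`φ_H : H → ℂ` is a morphism of right `A`-comodules, i.e. `∑ φ_H(x_H) x_A = φ_H(x) 1` for
all `x ∈ H`. -/
theorem bismash_normal_integral
    {A H : Type} [Ring A] [HopfAlgebra ℂ A] [Ring H] [HopfAlgebra ℂ H]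
    (tri : H →ₗ[ℂ] A →ₗ[ℂ] A) (rho : H →ₗ[ℂ] H ⊗[ℂ] A)
    (hlp : IsLinkedPair A H tri rho)
    (φA : A →ₗ[ℂ] ℂ) (hφA : IsNormalIntegral A φA)
    (φH : H →ₗ[ℂ] ℂ) (hφH : IsNormalIntegral H φH)
    (M : Type) [Ring M] [HopfAlgebra ℂ M] (e : A ⊗[ℂ] H ≃ₗ[ℂ] M)
    (hM : IsBismash A H tri rho M e) :
    IsNormalIntegral M
      ((LinearMap.mul' ℂ ℂ) ∘ₗ (TensorProduct.map φA φH) ∘ₗ (e.symm : M →ₗ[ℂ] A ⊗[ℂ] H))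
    ∧ (∀ (x : H) {ι : Type} (s : Finset ι) (h : ι → H) (c : ι → A),
        TRep (rho x) s h c → ∑ i ∈ s, φH (h i) • c i = φH x • (1 : A)) := by
  classical
  set Φ : M →ₗ[ℂ] ℂ :=
    (LinearMap.mul' ℂ ℂ) ∘ₗ (TensorProduct.map φA φH) ∘ₗ (e.symm : M →ₗ[ℂ] A ⊗[ℂ] H) with hΦ
  have Phi_apply : ∀ (b : A) (y : H), Φ (e (b ⊗ₜ[ℂ] y)) = φA b * φH y := by
    intro b y
    simp [hΦ, LinearMap.mul'_apply]
  have hΦ1 : Φ (1 : M) = 1 := by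
    rw [hM.one_def, Phi_apply, hφA.1, hφH.1, mul_one]
  -- the key Sweedler identity: `∑ φH(x₁ₕ) (x₁ₐ ⊗ x₂) = φH(x) (1 ⊗ 1)`
  have key1 : ∀ (x : H) {ι : Type} (t : Finset ι) (g : ι → H) (c : ι → A) (u : ι → H),
      (TensorProduct.map rho (LinearMap.id : H →ₗ[ℂ] H)) (Coalgebra.comul (R := ℂ) x)
        = ∑ j ∈ t, (g j ⊗ₜ[ℂ] c j) ⊗ₜ[ℂ] u j →
      ∑ j ∈ t, φH (u j) • (g j ⊗ₜ[ℂ] c j) = φH x • ((1 : H) ⊗ₜ[ℂ] (1 : A)) := by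
    intro x ι t g c u hw
    have hcomm : (rap φH : (H ⊗[ℂ] A) ⊗[ℂ] H →ₗ[ℂ] H ⊗[ℂ] A) ∘ₗ
        TensorProduct.map rho (LinearMap.id : H →ₗ[ℂ] H)
          = rho ∘ₗ (rap φH : H ⊗[ℂ] H →ₗ[ℂ] H) :=
      TensorProduct.ext' fun y z => by simp
    have h1 : rap φH ((TensorProduct.map rho (LinearMap.id : H →ₗ[ℂ] H))
        (Coalgebra.comul (R := ℂ) x)) = ∑ j ∈ t, φH (u j) • (g j ⊗ₜ[ℂ] c j) := by
      rw [hw, map_sum]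
      simp
    have h2 : rap φH ((TensorProduct.map rho (LinearMap.id : H →ₗ[ℂ] H))
        (Coalgebra.comul (R := ℂ) x)) = φH x • ((1 : H) ⊗ₜ[ℂ] (1 : A)) := by
      rw [← LinearMap.comp_apply, hcomm, LinearMap.comp_apply, int_right hφH x, map_smul,
        hlp.compat_one]
    rw [← h1, h2]
  -- right integral property on pure tensors
  have hr_pure : ∀ (a : A) (x : H),
      rap Φ (Coalgebra.comul (R := ℂ) (e (a ⊗ₜ[ℂ] x))) = Φ (e (a ⊗ₜ[ℂ] x)) • 1 := by
    intro a x
    obtain ⟨ι, t, g, c, u, hw⟩ := exists_trep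
      ((TensorProduct.map rho (LinearMap.id : H →ₗ[ℂ] H)) (Coalgebra.comul (R := ℂ) x))
    have hce := hM.comul_def a x (crep a) t Prod.fst Prod.snd g c u (crep_spec a) hw
    rw [hce]
    simp only [map_sum, rap_tmul, Phi_apply]
    -- the auxiliary bilinear map
    set K : H →ₗ[ℂ] A →ₗ[ℂ] M := LinearMap.mk₂ ℂ
        (fun h b => ∑ p ∈ crep a, φA (p.2 * b) • e (p.1 ⊗ₜ[ℂ] h))
        (fun h₁ h₂ b => by
          simp [TensorProduct.tmul_add, map_add, smul_add, Finset.sum_add_distrib])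
        (fun cc h b => by
          simp [TensorProduct.tmul_smul, map_smul, Finset.smul_sum, smul_smul, mul_comm])
        (fun h b₁ b₂ => by
          simp [mul_add, map_add, add_smul, Finset.sum_add_distrib])
        (fun cc h b => by
          simp [mul_smul_comm, Finset.smul_sum, smul_smul]) with hK
    set KK : H ⊗[ℂ] A →ₗ[ℂ] M := TensorProduct.lift K with hKK
    have KK_tmul : ∀ (h : H) (b : A),
        KK (h ⊗ₜ[ℂ] b) = ∑ p ∈ crep a, φA (p.2 * b) • e (p.1 ⊗ₜ[ℂ] h) := by
      intro h b
      simp [hKK, hK]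
    have hJ : ∑ p ∈ crep a, φA p.2 • e (p.1 ⊗ₜ[ℂ] (1 : H))
        = φA a • e ((1 : A) ⊗ₜ[ℂ] (1 : H)) := by
      have h := int_right hφA a
      rw [crep_spec a, map_sum] at h
      simp only [rap_tmul] at h
      set J : A →ₗ[ℂ] M := (e : A ⊗[ℂ] H →ₗ[ℂ] M) ∘ₗ
        ((TensorProduct.mk ℂ A H).flip (1 : H)) with hJdef
      have hJt : ∀ b : A, J b = e (b ⊗ₜ[ℂ] (1 : H)) := fun b => rfl
      calc ∑ p ∈ crep a, φA p.2 • e (p.1 ⊗ₜ[ℂ] (1 : H))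
          = J (∑ p ∈ crep a, φA p.2 • p.1) := by
            rw [map_sum]
            exact Finset.sum_congr rfl fun p _ => by rw [map_smul, hJt]
        _ = J (φA a • 1) := by rw [h]
        _ = φA a • e ((1 : A) ⊗ₜ[ℂ] (1 : H)) := by rw [map_smul, hJt]
    calc ∑ p ∈ crep a, ∑ j ∈ t, (φA (p.2 * c j) * φH (u j)) • e (p.1 ⊗ₜ[ℂ] g j)
        = ∑ j ∈ t, φH (u j) • KK (g j ⊗ₜ[ℂ] c j) := by
          rw [Finset.sum_comm]
          refine Finset.sum_congr rfl fun j _ => ?_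
          rw [KK_tmul, Finset.smul_sum]
          exact Finset.sum_congr rfl fun p _ => by rw [smul_smul, mul_comm]
      _ = KK (∑ j ∈ t, φH (u j) • (g j ⊗ₜ[ℂ] c j)) := by
          rw [map_sum]
          exact Finset.sum_congr rfl fun j _ => by rw [map_smul]
      _ = KK (φH x • ((1 : H) ⊗ₜ[ℂ] (1 : A))) := by rw [key1 x t g c u hw]
      _ = φH x • ∑ p ∈ crep a, φA p.2 • e (p.1 ⊗ₜ[ℂ] (1 : H)) := by
          rw [map_smul, KK_tmul]
          simp [mul_one]
      _ = φH x • (φA a • e ((1 : A) ⊗ₜ[ℂ] (1 : H))) := by rw [hJ]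
      _ = (φA a * φH x) • (1 : M) := by rw [← hM.one_def, smul_comm, smul_smul]
  -- right integral property everywhere
  have hr_all : ∀ m : M, rap Φ (Coalgebra.comul (R := ℂ) m) = Φ m • 1 := by
    have hw : ∀ w : A ⊗[ℂ] H, rap Φ (Coalgebra.comul (R := ℂ) (e w)) = Φ (e w) • 1 := by
      intro w
      induction w using TensorProduct.induction_on with
      | zero => simp
      | tmul a x => exact hr_pure a x
      | add w₁ w₂ ih₁ ih₂ => simp [map_add, ih₁, ih₂, add_smul]
    intro m
    have h := hw (e.symm m)
    simpa using h
  -- left integral property, by the general theory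
  have hl_all : ∀ m : M, lap Φ (Coalgebra.comul (R := ℂ) m) = Φ m • 1 :=
    right_to_left Φ hΦ1 hr_all
  -- part 2 : φH is a morphism of comodules
  have part2 : ∀ (x : H) {ι : Type} (s : Finset ι) (h : ι → H) (c : ι → A),
      TRep (rho x) s h c → ∑ i ∈ s, φH (h i) • c i = φH x • (1 : A) := by
    intro x ι s h c hxr
    obtain ⟨ι', t, g, c', u, hw⟩ := exists_trep
      ((TensorProduct.map rho (LinearMap.id : H →ₗ[ℂ] H)) (Coalgebra.comul (R := ℂ) x))
    have h1rep : Rep2 (1 : A) ({0} : Finset ℕ) (fun _ => 1) (fun _ => 1) := by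
      show Coalgebra.comul (R := ℂ) (1 : A) = ∑ _i ∈ ({0} : Finset ℕ), (1 : A) ⊗ₜ[ℂ] (1 : A)
      simp [Algebra.TensorProduct.one_def]
    have hce := hM.comul_def 1 x ({0} : Finset ℕ) t (fun _ => 1) (fun _ => 1) g c' u h1rep hw
    have hle := hl_all (e ((1 : A) ⊗ₜ[ℂ] x))
    rw [hce, hM.one_def] at hle
    simp only [Finset.sum_singleton, map_sum, lap_tmul, Phi_apply, hφA.1, one_mul] at hle
    -- hle : ∑ j ∈ t, φH (g j) • e ((1 * c' j) ⊗ₜ u j) = φH x • e (1 ⊗ₜ 1)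
    have hle2 := congrArg (⇑(e.symm)) hle
    simp only [map_sum, map_smul, LinearEquiv.symm_apply_apply, one_mul] at hle2
    have hle3 := congrArg
      (⇑(rap (Coalgebra.counit (R := ℂ) : H →ₗ[ℂ] ℂ) : A ⊗[ℂ] H →ₗ[ℂ] A)) hle2
    simp only [map_sum, map_smul, rap_tmul, Bialgebra.counit_one, one_smul] at hle3
    -- hle3 : ∑ j ∈ t, φH (g j) • (ε (u j) • c' j) = φH x • 1
    have hΞcomm : (rap (Coalgebra.counit (R := ℂ) : H →ₗ[ℂ] ℂ) :
        (H ⊗[ℂ] A) ⊗[ℂ] H →ₗ[ℂ] H ⊗[ℂ] A) ∘ₗ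
          TensorProduct.map rho (LinearMap.id : H →ₗ[ℂ] H)
        = rho ∘ₗ (rap (Coalgebra.counit (R := ℂ) : H →ₗ[ℂ] ℂ) : H ⊗[ℂ] H →ₗ[ℂ] H) :=
      TensorProduct.ext' fun y z => by simp
    have hΞ1 : rap (Coalgebra.counit (R := ℂ) : H →ₗ[ℂ] ℂ)
        ((TensorProduct.map rho (LinearMap.id : H →ₗ[ℂ] H)) (Coalgebra.comul (R := ℂ) x))
          = rho x := by
      rw [← LinearMap.comp_apply, hΞcomm, LinearMap.comp_apply, rap_counit_comul]
    have hΞ2 : rap (Coalgebra.counit (R := ℂ) : H →ₗ[ℂ] ℂ)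
        ((TensorProduct.map rho (LinearMap.id : H →ₗ[ℂ] H)) (Coalgebra.comul (R := ℂ) x))
          = ∑ j ∈ t, Coalgebra.counit (R := ℂ) (u j) • (g j ⊗ₜ[ℂ] c' j) := by
      rw [hw, map_sum]
      simp
    have hrho : rho x = ∑ j ∈ t, Coalgebra.counit (R := ℂ) (u j) • (g j ⊗ₜ[ℂ] c' j) := by
      rw [← hΞ1, hΞ2]
    have hfin1 : lap φH (rho x) = ∑ i ∈ s, φH (h i) • c i := by
      rw [show rho x = ∑ i ∈ s, h i ⊗ₜ[ℂ] c i from hxr, map_sum]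
      simp
    have hfin2 : lap φH (rho x) = φH x • (1 : A) := by
      rw [hrho, map_sum]
      simp only [map_smul, lap_tmul]
      calc ∑ j ∈ t, Coalgebra.counit (R := ℂ) (u j) • (φH (g j) • c' j)
          = ∑ j ∈ t, φH (g j) • (Coalgebra.counit (R := ℂ) (u j) • c' j) :=
            Finset.sum_congr rfl fun j _ => by rw [smul_smul, smul_smul, mul_comm]
        _ = φH x • (1 : A) := hle3
    rw [← hfin1, hfin2]
  refine ⟨⟨hΦ1, ?_, ?_⟩, part2⟩
  · intro m ι s m1 m2 hrep
    have hl := hl_all m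
    rw [show Coalgebra.comul (R := ℂ) m = ∑ i ∈ s, m1 i ⊗ₜ[ℂ] m2 i from hrep, map_sum] at hl
    simpa using hl
  · intro m ι s m1 m2 hrep
    have hr := hr_all m
    rw [show Coalgebra.comul (R := ℂ) m = ∑ i ∈ s, m1 i ⊗ₜ[ℂ] m2 i from hrep, map_sum] at hr
    simpa using hr
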